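/- In the game of cops and robbers played with c cops on a connected simple graph G of minimum degree δ ≥ 3 and girth at least 9, if c ≤ δ then the robber has a winning strategy; equivalently, the cop number of G is strictly greater than δ. -/

import Mathlib

section CopsRobbersAux

open SimpleGraph

variable {V : Type*} [DecidableEq V] {G : SimpleGraph V}

lemma nine_le_cycle_length (hg : 9 ≤ G.girth) {a : V} (w : G.Walk a a) (hw : w.IsCycle) :
    9 ≤ w.length := by
  have h1 : G.egirth ≤ (w.length : ℕ∞) :=
    iInf_le_of_le a (iInf_le_of_le w (iInf_le_of_le hw le_rfl))
  have := ENat.toNat_le_toNat h1 (by simp)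
  simpa [SimpleGraph.girth] using le_trans hg this

lemma eight_le_walk_length (hg : 9 ≤ G.girth) {x v : V} (hxv : G.Adj x v)
    (w : G.Walk x v) (he : s(x, v) ∉ w.edges) : 8 ≤ w.length := by
  have hp : (w.bypass.reverse).IsPath := w.bypass_isPath.reverse
  have he' : s(x, v) ∉ (w.bypass.reverse).edges := by
    rw [SimpleGraph.Walk.edges_reverse]
    simp only [List.mem_reverse]
    exact fun h => he (w.edges_bypass_subset h)
  have hc : ((w.bypass.reverse).cons hxv).IsCycle := by
    rw [SimpleGraph.Walk.cons_isCycle_iff]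
    exact ⟨hp, he'⟩
  have := nine_le_cycle_length hg _ hc
  simp only [SimpleGraph.Walk.length_cons, SimpleGraph.Walk.length_reverse] at this
  have hb := SimpleGraph.Walk.length_bypass_le w
  omega

/-- Master tool: a walk between two distinct neighbors of `v` avoiding `v` has length ≥ 7. -/
lemma seven_le_walk_length (hg : 9 ≤ G.girth) {x y v : V} (hxv : G.Adj x v) (hyv : G.Adj y v)
    (hxy : x ≠ y) (w : G.Walk x y) (hv : v ∉ w.support) : 7 ≤ w.length := by
  have he : s(x, v) ∉ (w.concat hyv).edges := by
    rw [SimpleGraph.Walk.edges_concat]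
    intro h
    rw [List.concat_eq_append, List.mem_append] at h
    rcases h with h | h
    · exact hv (w.snd_mem_support_of_mem_edges h)
    · simp only [List.mem_singleton, Sym2.eq_iff] at h
      rcases h with ⟨h1, _⟩ | ⟨h1, h2⟩
      · exact hxy h1
      · exact G.ne_of_adj hyv h2.symm
  have := eight_le_walk_length hg hxv (w.concat hyv) he
  rw [SimpleGraph.Walk.length_concat] at this
  omega

lemma exists_geodesic_avoiding (hconn : G.Connected) {z t : V} (v : V)
    (hne : G.dist z v + G.dist v t ≠ G.dist z t) :
    ∃ w : G.Walk z t, w.length = G.dist z t ∧ v ∉ w.support := by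
  obtain ⟨w, hw⟩ := hconn.exists_walk_length_eq_dist z t
  by_cases hv : v ∈ w.support
  · exfalso
    have h1 : G.dist z v ≤ (w.takeUntil v hv).length := SimpleGraph.dist_le _
    have h2 : G.dist v t ≤ (w.dropUntil v hv).length := SimpleGraph.dist_le _
    have h3 := congr_arg SimpleGraph.Walk.length (w.take_spec hv)
    rw [SimpleGraph.Walk.length_append] at h3
    have htri := hconn.dist_triangle (u := z) (v := v) (w := t)
    omega
  · exact ⟨w, hw, hv⟩

set_option linter.unusedSectionVars false

open scoped Classical in
/-- The gate of `z` towards `v`: a neighbor of `v` one step closer to `z`. -/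
noncomputable def gate (G : SimpleGraph V) (v z : V) : V :=
  if h : ∃ x, G.Adj x v ∧ G.dist z x + 1 = G.dist z v then h.choose else z

lemma gate_spec (hconn : G.Connected) {v z : V} (hd : 1 ≤ G.dist z v) :
    G.Adj (gate G v z) v ∧ G.dist z (gate G v z) + 1 = G.dist z v := by
  have hex : ∃ x, G.Adj x v ∧ G.dist z x + 1 = G.dist z v := by
    obtain ⟨w, hw⟩ := hconn.exists_walk_length_eq_dist z v
    cases hw2 : w.reverse with
    | nil =>
        exfalso
        have := congr_arg SimpleGraph.Walk.length hw2
        simp only [SimpleGraph.Walk.length_reverse, SimpleGraph.Walk.length_nil] at this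
        omega
    | cons h p =>
        rename_i x
        refine ⟨x, h.symm, ?_⟩
        have hlen : p.length + 1 = G.dist z v := by
          have := congr_arg SimpleGraph.Walk.length hw2
          simp only [SimpleGraph.Walk.length_reverse, SimpleGraph.Walk.length_cons] at this
          omega
        have h1 : G.dist z x ≤ p.length := by
          have := SimpleGraph.dist_le p.reverse
          simpa using this
        have h2 : G.dist z v ≤ G.dist z x + 1 := by
          have htri := hconn.dist_triangle (u := z) (v := x) (w := v)
          have : G.dist x v ≤ 1 := by
            have := SimpleGraph.dist_le (SimpleGraph.Walk.cons h.symm SimpleGraph.Walk.nil :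
              G.Walk x v)
            simpa using this
          omega
        omega
  classical
  rw [gate]
  rw [dif_pos hex]
  exact hex.choose_spec

lemma dist_adj {x v : V} (h : G.Adj x v) : G.dist x v = 1 :=
  SimpleGraph.dist_eq_one_iff_adj.2 h

lemma dist_near (hconn : G.Connected) {x v : V} (h : G.Adj x v) (z : V) :
    G.dist z v ≤ G.dist z x + 1 ∧ G.dist z x ≤ G.dist z v + 1 := by
  have h1 := hconn.dist_triangle (u := z) (v := x) (w := v)
  have h2 := hconn.dist_triangle (u := z) (v := v) (w := x)
  have h3 : G.dist x v = 1 := dist_adj h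
  have h4 : G.dist v x = 1 := by rw [SimpleGraph.dist_comm]; exact h3
  omega

lemma no_adjacent_neighbors (hg : 9 ≤ G.girth) {x y v : V} (hx : G.Adj x v) (hy : G.Adj y v)
    (hxy : G.Adj x y) : False := by
  have he : s(x, v) ∉ (SimpleGraph.Walk.cons hxy
      (SimpleGraph.Walk.cons hy SimpleGraph.Walk.nil) : G.Walk x v).edges := by
    intro h
    simp only [SimpleGraph.Walk.edges_cons, SimpleGraph.Walk.edges_nil, List.mem_cons,
      List.not_mem_nil, or_false, Sym2.eq_iff] at h
    rcases h with (⟨-, h2⟩ | ⟨h1, -⟩) | (⟨h1, -⟩ | ⟨-, h2⟩)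
    · exact G.ne_of_adj hy h2.symm
    · exact G.ne_of_adj hxy h1
    · exact G.ne_of_adj hxy h1
    · exact G.ne_of_adj hy h2.symm
  have h8 := eight_le_walk_length hg hx _ he
  simp only [SimpleGraph.Walk.length_cons, SimpleGraph.Walk.length_nil] at h8
  omega

lemma gate_eq (hconn : G.Connected) (hg : 9 ≤ G.girth) {v z x : V} (hx : G.Adj x v)
    (hxd : G.dist z x + 1 = G.dist z v) (hd4 : G.dist z v ≤ 4) : x = gate G v z := by
  have hd1 : 1 ≤ G.dist z v := by omega
  obtain ⟨hgadj, hgd⟩ := gate_spec hconn hd1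
  by_contra hne
  obtain ⟨w1, hw1len, hw1av⟩ := exists_geodesic_avoiding hconn (z := z) (t := x) v (by
    rw [SimpleGraph.dist_comm (u := v) (v := x), dist_adj hx]
    omega)
  obtain ⟨w2, hw2len, hw2av⟩ := exists_geodesic_avoiding hconn (z := z) (t := gate G v z) v (by
    rw [SimpleGraph.dist_comm (u := v) (v := gate G v z), dist_adj hgadj]
    omega)
  have hv : v ∉ (w1.reverse.append w2).support := by
    rw [SimpleGraph.Walk.mem_support_append_iff]
    rintro (h | h)
    · rw [SimpleGraph.Walk.support_reverse, List.mem_reverse] at h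
      exact hw1av h
    · exact hw2av h
  have h7 := seven_le_walk_length hg hx hgadj hne (w1.reverse.append w2) hv
  rw [SimpleGraph.Walk.length_append, SimpleGraph.Walk.length_reverse, hw1len, hw2len] at h7
  omega

lemma no_equidistant_neighbor (hconn : G.Connected) (hg : 9 ≤ G.girth) {v z x : V}
    (hx : G.Adj x v) (heq : G.dist z x = G.dist z v) (h1 : 1 ≤ G.dist z v)
    (h3 : G.dist z v ≤ 3) : False := by
  obtain ⟨w1, hw1len, hw1av⟩ := exists_geodesic_avoiding hconn (z := z) (t := x) v (by
    rw [SimpleGraph.dist_comm (u := v) (v := x), dist_adj hx]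
    omega)
  obtain ⟨w2, hw2len, hw2av⟩ := exists_geodesic_avoiding hconn (z := z) (t := v) x (by
    rw [dist_adj hx]
    omega)
  have he : s(x, v) ∉ (w1.reverse.append w2).edges := by
    intro h
    rw [SimpleGraph.Walk.edges_append, List.mem_append] at h
    rcases h with h | h
    · rw [SimpleGraph.Walk.edges_reverse, List.mem_reverse] at h
      exact hw1av (SimpleGraph.Walk.snd_mem_support_of_mem_edges w1 h)
    · exact hw2av (SimpleGraph.Walk.fst_mem_support_of_mem_edges w2 h)
  have h8 := eight_le_walk_length hg hx (w1.reverse.append w2) he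
  rw [SimpleGraph.Walk.length_append, SimpleGraph.Walk.length_reverse, hw1len, hw2len] at h8
  omega

lemma dist_offgate (hconn : G.Connected) (hg : 9 ≤ G.girth) {v z x : V}
    (h1 : 1 ≤ G.dist z v) (h3 : G.dist z v ≤ 3) (hx : G.Adj x v) (hne : x ≠ gate G v z) :
    G.dist z x = G.dist z v + 1 := by
  obtain ⟨ha, hb⟩ := dist_near hconn hx z
  rcases Nat.lt_trichotomy (G.dist z x) (G.dist z v) with h | h | h
  · exact absurd (gate_eq hconn hg hx (by omega) (by omega)) hne
  · exact absurd (no_equidistant_neighbor hconn hg hx h h1 h3) not_false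
  · omega

lemma gate_of_close (hconn : G.Connected) (hg : 9 ≤ G.girth) {v y z : V} (hvy : G.Adj v y)
    (hzy : G.dist z y ≤ 3) (hgz : gate G y z ≠ v) (hz : z ≠ v) :
    G.dist z y + 1 = G.dist z v ∧ gate G v z = y ∧ G.dist z v ≤ 4 := by
  have hdv1 : 1 ≤ G.dist z v := hconn.pos_dist_of_ne hz
  obtain ⟨ha, hb⟩ := dist_near hconn hvy.symm z
  by_cases hzyeq : z = y
  · subst hzyeq
    have h0 : G.dist z z = 0 := SimpleGraph.dist_self
    have h1 : G.dist z v ≤ 1 := by omega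
    have hgv : z = gate G v z := gate_eq hconn hg hvy.symm (by omega) (by omega)
    exact ⟨by omega, hgv.symm, by omega⟩
  · have hdy1 : 1 ≤ G.dist z y := hconn.pos_dist_of_ne hzyeq
    rcases Nat.lt_trichotomy (G.dist z y) (G.dist z v) with h | h | h
    · have hyg : y = gate G v z := gate_eq hconn hg hvy.symm (by omega) (by omega)
      exact ⟨by omega, hyg.symm, by omega⟩
    · exact absurd (no_equidistant_neighbor hconn hg hvy.symm h (by omega) (by omega)) not_false
    · have hvg : v = gate G y z := gate_eq hconn hg hvy (by omega) (by omega)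
      exact absurd hvg.symm hgz

lemma gate_of_verynear (hconn : G.Connected) (hg : 9 ≤ G.girth) {v y z : V} (hvy : G.Adj v y)
    (hzy : G.dist z y ≤ 1) (hz : z ≠ v) : G.dist z v ≤ 2 ∧ gate G v z = y := by
  have hdv1 : 1 ≤ G.dist z v := hconn.pos_dist_of_ne hz
  obtain ⟨ha, hb⟩ := dist_near hconn hvy.symm z
  by_cases hzyeq : z = y
  · subst hzyeq
    have h0 : G.dist z z = 0 := SimpleGraph.dist_self
    have hgv : z = gate G v z := gate_eq hconn hg hvy.symm (by omega) (by omega)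
    exact ⟨by omega, hgv.symm⟩
  · have hdy1 : 1 ≤ G.dist z y := hconn.pos_dist_of_ne hzyeq
    have hzy1 : G.dist z y = 1 := by omega
    have hadjzy : G.Adj z y := SimpleGraph.dist_eq_one_iff_adj.1 hzy1
    have hdvne1 : G.dist z v ≠ 1 := by
      intro h
      exact no_adjacent_neighbors hg (SimpleGraph.dist_eq_one_iff_adj.1 h) hvy.symm hadjzy
    have hyg : y = gate G v z := gate_eq hconn hg hvy.symm (by omega) (by omega)
    exact ⟨by omega, hyg.symm⟩

open scoped Classical in
/-- The set of cops within distance 3 of `v` whose gate is not `b`. -/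
noncomputable def closeOff {c : ℕ} (G : SimpleGraph V) (p : Fin c → V) (v b : V) :
    Finset (Fin c) :=
  Finset.univ.filter (fun i => G.dist (p i) v ≤ 3 ∧ gate G v (p i) ≠ b)

open scoped Classical in
lemma mem_closeOff {c : ℕ} {p : Fin c → V} {v b : V} {i : Fin c} :
    i ∈ closeOff G p v b ↔ G.dist (p i) v ≤ 3 ∧ gate G v (p i) ≠ b := by
  simp [closeOff]

lemma maint [Fintype V] [DecidableRel G.Adj] (hconn : G.Connected) (hg : 9 ≤ G.girth)
    {δ : ℕ} (hδ : 3 ≤ δ) (hdeg : ∀ v : V, δ ≤ G.degree v) {c : ℕ} (hc : c ≤ δ)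
    {p p' : Fin c → V} {v : V}
    (hmove : ∀ i, p' i = p i ∨ G.Adj (p i) (p' i))
    (h1 : ∀ i, 2 ≤ G.dist (p i) v)
    {b : V} (hb : G.Adj v b) (h2 : (closeOff G p v b).card ≤ δ - 2) :
    ∃ y, G.Adj v y ∧ (∀ i, 2 ≤ G.dist (p' i) y) ∧ (closeOff G p' y v).card ≤ δ - 2 := by
  classical
  rcases Nat.eq_zero_or_pos c with hc0 | hcpos
  · subst hc0
    refine ⟨b, hb, fun i => i.elim0, ?_⟩
    have : (closeOff G p' b v) ⊆ Finset.univ := Finset.subset_univ _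
    have h0 : (closeOff G p' b v).card ≤ 0 := by
      simpa using Finset.card_le_card this
    omega
  haveI : Nonempty (Fin c) := ⟨⟨0, hcpos⟩⟩
  have fact_move : ∀ i, G.dist (p i) (p' i) ≤ 1 := by
    intro i
    rcases hmove i with h | h
    · rw [h, SimpleGraph.dist_self]; omega
    · rw [dist_adj h]
  have fact_tri : ∀ i (u : V), G.dist (p i) u ≤ G.dist (p i) (p' i) + G.dist (p' i) u :=
    fun i u => hconn.dist_triangle
  have fact_d' : ∀ i, 1 ≤ G.dist (p' i) v := by
    intro i
    have := fact_tri i v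
    have := h1 i
    have := fact_move i
    omega
  have fact_ne : ∀ i, p' i ≠ v := by
    intro i h
    have := fact_d' i
    rw [h, SimpleGraph.dist_self] at this
    omega
  -- blocked witnesses
  have keyA : ∀ y, G.Adj v y → ∀ i, G.dist (p' i) y ≤ 1 →
      gate G v (p' i) = y ∧ G.dist (p i) v ≤ 3 ∧ gate G v (p i) = y := by
    intro y hvy i hi
    obtain ⟨hd2, hgy⟩ := gate_of_verynear hconn hg hvy hi (fact_ne i)
    have hpre3 : G.dist (p i) v ≤ 3 := by
      have := fact_tri i v
      have := fact_move i
      omega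
    have hpiy : G.dist (p i) y ≤ 2 := by
      have := fact_tri i y
      have := fact_move i
      omega
    have hd2' : 2 ≤ G.dist (p i) v := h1 i
    obtain ⟨hna, hnb⟩ := dist_near hconn hvy.symm (p i)
    -- dist (p i) y ∈ {d-1, d, d+1}; only d-1 possible
    have hgpre : gate G v (p i) = y := by
      rcases Nat.lt_trichotomy (G.dist (p i) y) (G.dist (p i) v) with h | h | h
      · exact (gate_eq hconn hg hvy.symm (by omega) (by omega)).symm
      · exact absurd (no_equidistant_neighbor hconn hg hvy.symm h (by omega) (by omega)) not_false
      · omega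
    exact ⟨hgy, hpre3, hgpre⟩
  have keyB : ∀ y, G.Adj v y → ∀ i ∈ closeOff G p' y v, gate G v (p' i) = y := by
    intro y hvy i hi
    rw [mem_closeOff] at hi
    exact (gate_of_close hconn hg hvy hi.1 hi.2 (fact_ne i)).2.1
  by_contra hcon
  push_neg at hcon
  -- every neighbor y is blocked or has big closeOff
  have halt : ∀ y, G.Adj v y → (∃ i, G.dist (p' i) y ≤ 1) ∨ δ - 2 < (closeOff G p' y v).card := by
    intro y hvy
    by_cases hblock : ∃ i, G.dist (p' i) y ≤ 1
    · exact Or.inl hblock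
    · push_neg at hblock
      exact Or.inr (hcon y hvy (fun i => by have := hblock i; omega))
  set NB := G.neighborFinset v with hNB
  have hNBcard : δ ≤ NB.card := by
    rw [hNB, SimpleGraph.card_neighborFinset_eq_degree]
    exact hdeg v
  have hmemNB : ∀ {y}, y ∈ NB ↔ G.Adj v y := by
    intro y
    rw [hNB, SimpleGraph.mem_neighborFinset]
  set I := NB.filter (fun y => δ - 2 < (closeOff G p' y v).card) with hI
  -- at most one y in I
  have hIcard : I.card ≤ 1 := by
    by_contra hI2
    push_neg at hI2
    obtain ⟨y₁, hy₁, y₂, hy₂, hyne⟩ := Finset.one_lt_card.1 hI2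
    rw [hI, Finset.mem_filter] at hy₁ hy₂
    have hd₁ : δ - 1 ≤ (closeOff G p' y₁ v).card := by omega
    have hd₂ : δ - 1 ≤ (closeOff G p' y₂ v).card := by omega
    have hdisj : Disjoint (closeOff G p' y₁ v) (closeOff G p' y₂ v) := by
      rw [Finset.disjoint_left]
      intro i hi1 hi2
      have e1 := keyB y₁ (hmemNB.1 hy₁.1) i hi1
      have e2 := keyB y₂ (hmemNB.1 hy₂.1) i hi2
      exact hyne (e1 ▸ e2 ▸ rfl)
    have hun := Finset.card_union_of_disjoint hdisj
    have hle : (closeOff G p' y₁ v ∪ closeOff G p' y₂ v).card ≤ c := by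
      have := Finset.card_le_card (Finset.subset_univ (closeOff G p' y₁ v ∪ closeOff G p' y₂ v))
      simpa using this
    omega
  -- witnesses for blocked neighbors
  have hwit : ∀ y : V, ∃ i : Fin c, y ∈ NB → y ∉ I →
      gate G v (p' i) = y ∧ G.dist (p i) v ≤ 3 ∧ gate G v (p i) = y := by
    intro y
    by_cases hy : y ∈ NB ∧ y ∉ I
    · have hvy := hmemNB.1 hy.1
      rcases halt y hvy with ⟨i, hi⟩ | hbig
      · exact ⟨i, fun _ _ => keyA y hvy i hi⟩
      · exfalso
        exact hy.2 (by rw [hI, Finset.mem_filter]; exact ⟨hy.1, hbig⟩)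
    · refine ⟨Classical.arbitrary _, fun h1 h2 => absurd ⟨h1, h2⟩ hy⟩
  choose wit hwitspec using hwit
  rcases Finset.eq_empty_or_nonempty I with hIe | ⟨y₀, hy₀⟩
  · -- all neighbors blocked: witnesses of NB.erase b inject into closeOff G p v b
    have hinj : Finset.card (NB.erase b) ≤ (closeOff G p v b).card := by
      apply Finset.card_le_card_of_injOn (fun y => wit y)
      · intro y hy
        rw [Finset.mem_coe, Finset.mem_erase] at hy
        have hyNB := hy.2
        have hyI : y ∉ I := by rw [hIe]; exact Finset.notMem_empty y
        obtain ⟨-, hd3, hg3⟩ := hwitspec y hyNB hyI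
        rw [Finset.mem_coe, mem_closeOff]
        exact ⟨hd3, by rw [hg3]; exact hy.1⟩
      · intro y₁ hy₁ y₂ hy₂ heq
        rw [Finset.mem_coe, Finset.mem_erase] at hy₁ hy₂
        have e₁ := (hwitspec y₁ hy₁.2 (by rw [hIe]; exact Finset.notMem_empty _)).1
        have e₂ := (hwitspec y₂ hy₂.2 (by rw [hIe]; exact Finset.notMem_empty _)).1
        dsimp only at heq
        rw [← e₁, ← e₂, heq]
    have hbNB : b ∈ NB := hmemNB.2 hb
    have := Finset.card_erase_of_mem hbNB
    omega
  · -- I = {y₀} : fiber counting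
    have hIeq : I = {y₀} := by
      apply Finset.eq_singleton_iff_unique_mem.2
      refine ⟨hy₀, fun x hx => ?_⟩
      by_contra hne
      have : 2 ≤ I.card := Finset.one_lt_card.2 ⟨x, hx, y₀, hy₀, hne⟩
      omega
    set Fib : V → Finset (Fin c) := fun y => Finset.univ.filter (fun i => gate G v (p' i) = y)
      with hFib
    have hdisjF : ∀ y₁ ∈ NB, ∀ y₂ ∈ NB, y₁ ≠ y₂ → Disjoint (Fib y₁) (Fib y₂) := by
      intro y₁ _ y₂ _ hne
      rw [Finset.disjoint_left]
      intro i hi1 hi2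
      rw [hFib, Finset.mem_filter] at hi1 hi2
      exact hne (hi1.2 ▸ hi2.2 ▸ rfl)
    have hsum : ∑ y ∈ NB, (Fib y).card ≤ c := by
      rw [← Finset.card_biUnion hdisjF]
      have := Finset.card_le_card (Finset.subset_univ (NB.biUnion Fib))
      simpa using this
    have hlower : ∀ y ∈ NB, (if y = y₀ then δ - 1 else 1) ≤ (Fib y).card := by
      intro y hy
      by_cases hyy : y = y₀
      · subst hyy
        rw [if_pos rfl]
        have hyI : y ∈ I := hy₀
        rw [hI, Finset.mem_filter] at hyI
        have hsub : closeOff G p' y v ⊆ Fib y := by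
          intro i hi
          rw [hFib, Finset.mem_filter]
          exact ⟨Finset.mem_univ _, keyB y (hmemNB.1 hy) i hi⟩
        have := Finset.card_le_card hsub
        omega
      · rw [if_neg hyy]
        have hyI : y ∉ I := by rw [hIeq, Finset.mem_singleton]; exact hyy
        obtain ⟨hgw, -, -⟩ := hwitspec y hy hyI
        exact Finset.card_pos.2
          ⟨wit y, by rw [hFib, Finset.mem_filter]; exact ⟨Finset.mem_univ _, hgw⟩⟩
    have hsum2 : (∑ y ∈ NB, if y = y₀ then δ - 1 else 1) ≤ c :=
      le_trans (Finset.sum_le_sum hlower) hsum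
    have hy₀NB : y₀ ∈ NB := by
      have := hy₀
      rw [hI, Finset.mem_filter] at this
      exact this.1
    have herase : (∑ y ∈ NB.erase y₀, if y = y₀ then δ - 1 else 1) = NB.card - 1 := by
      rw [Finset.sum_congr rfl (fun y hy => if_neg (Finset.ne_of_mem_erase hy)),
        Finset.sum_const, smul_eq_mul, mul_one, Finset.card_erase_of_mem hy₀NB]
    have htot := Finset.sum_erase_add NB (fun y => if y = y₀ then δ - 1 else 1) hy₀NB
    rw [herase] at htot
    simp only [if_pos rfl] at htot
    have hfin : NB.card - 1 + (δ - 1) ≤ c := le_trans (le_of_eq htot) hsum2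
    omega

lemma start [Fintype V] [DecidableRel G.Adj] (hconn : G.Connected) (hg : 9 ≤ G.girth)
    {δ : ℕ} (hδ : 3 ≤ δ) (hdeg : ∀ v : V, δ ≤ G.degree v) {c : ℕ} (hc : c ≤ δ)
    (p : Fin c → V) :
    ∃ v b, G.Adj v b ∧ (∀ i, 2 ≤ G.dist (p i) v) ∧ (closeOff G p v b).card ≤ δ - 2 := by
  classical
  haveI : Nonempty V := hconn.nonempty
  have hNBne : ∀ v : V, (G.neighborFinset v).Nonempty := by
    intro v
    rw [← Finset.card_pos, SimpleGraph.card_neighborFinset_eq_degree]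
    have := hdeg v
    omega
  have hNBadj : ∀ {v y : V}, y ∈ G.neighborFinset v ↔ G.Adj v y := by
    intro v y
    rw [SimpleGraph.mem_neighborFinset]
  -- maximizer of f
  set f : V → ℕ := fun v => ∑ i, min (G.dist (p i) v) 4 with hf
  obtain ⟨v, -, hmax⟩ := Finset.exists_max_image Finset.univ f ⟨Classical.arbitrary V, by simp⟩
  set NB := G.neighborFinset v with hNB
  have hNBcard : δ ≤ NB.card := by
    rw [hNB, SimpleGraph.card_neighborFinset_eq_degree]
    exact hdeg v
  set Tset := Finset.univ.filter (fun i => G.dist (p i) v ≤ 3) with hTset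
  set Rset := Finset.univ.filter (fun i => G.dist (p i) v = 4) with hRset
  set mset : V → Finset (Fin c) := fun y =>
    Finset.univ.filter (fun i => 1 ≤ G.dist (p i) v ∧ G.dist (p i) v ≤ 3 ∧ gate G v (p i) = y)
    with hmset
  set rset : V → Finset (Fin c) := fun y =>
    Finset.univ.filter (fun i => G.dist (p i) v = 4 ∧ G.dist (p i) y = 3) with hrset
  -- the key per-neighbor inequality
  have hkey : ∀ y ∈ NB, Tset.card ≤ 2 * (mset y).card + (rset y).card := by
    intro y hy
    have hvy : G.Adj v y := hNBadj.1 hy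
    set gainS := Finset.univ.filter
      (fun i => G.dist (p i) v ≤ 3 ∧ ¬(1 ≤ G.dist (p i) v ∧ gate G v (p i) = y)) with hgainS
    set lossS := Finset.univ.filter
      (fun i => 1 ≤ G.dist (p i) v ∧ G.dist (p i) v ≤ 4 ∧ G.dist (p i) y + 1 = G.dist (p i) v)
      with hlossS
    -- pointwise inequality summed
    have hpt : ∀ i : Fin c,
        min (G.dist (p i) v) 4 + (if G.dist (p i) v ≤ 3 ∧
          ¬(1 ≤ G.dist (p i) v ∧ gate G v (p i) = y) then 1 else 0) ≤
        min (G.dist (p i) y) 4 + (if 1 ≤ G.dist (p i) v ∧ G.dist (p i) v ≤ 4 ∧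
          G.dist (p i) y + 1 = G.dist (p i) v then 1 else 0) := by
      intro i
      obtain ⟨hn1, hn2⟩ := dist_near hconn hvy.symm (p i)
      by_cases hd0 : G.dist (p i) v = 0
      · have hpi : p i = v := (hconn.dist_eq_zero_iff).1 hd0
        have he1 : G.dist (p i) y = 1 := by rw [hpi]; exact dist_adj hvy
        rw [if_pos ⟨by omega, fun hh => by omega⟩]
        by_cases hQ : 1 ≤ G.dist (p i) v ∧ G.dist (p i) v ≤ 4 ∧
            G.dist (p i) y + 1 = G.dist (p i) v
        · rw [if_pos hQ]; omega
        · rw [if_neg hQ]; omega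
      · by_cases hd3 : G.dist (p i) v ≤ 3
        · by_cases hgy : gate G v (p i) = y
          · have hgs := (gate_spec hconn (v := v) (z := p i) (by omega)).2
            rw [hgy] at hgs
            rw [if_neg (fun hh => hh.2 ⟨by omega, hgy⟩)]
            rw [if_pos ⟨by omega, by omega, by omega⟩]
            omega
          · have he := dist_offgate hconn hg (by omega) hd3 hvy.symm (fun hh => hgy hh.symm)
            rw [if_pos ⟨hd3, fun hh => hgy hh.2⟩]
            rw [if_neg (fun hh => by omega)]
            omega
        · rw [if_neg (fun hh => hd3 hh.1)]
          by_cases hd4 : G.dist (p i) v = 4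
          · by_cases he3 : G.dist (p i) y = 3
            · rw [if_pos ⟨by omega, by omega, by omega⟩]
              omega
            · rw [if_neg (fun hh => by omega)]
              omega
          · by_cases hQ : 1 ≤ G.dist (p i) v ∧ G.dist (p i) v ≤ 4 ∧
                G.dist (p i) y + 1 = G.dist (p i) v
            · rw [if_pos hQ]; omega
            · rw [if_neg hQ]; omega
    have hsum : f v + gainS.card ≤ f y + lossS.card := by
      rw [hf, hgainS, hlossS, Finset.card_filter, Finset.card_filter,
        ← Finset.sum_add_distrib, ← Finset.sum_add_distrib]
      exact Finset.sum_le_sum (fun i _ => hpt i)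
    have hfy : f y ≤ f v := hmax y (Finset.mem_univ y)
    have hgl : gainS.card ≤ lossS.card := by omega
    -- gainS = Tset \ mset y
    have hgeq : gainS = Tset \ mset y := by
      ext i
      rw [hgainS, hTset, hmset, Finset.mem_sdiff, Finset.mem_filter, Finset.mem_filter,
        Finset.mem_filter]
      constructor
      · rintro ⟨hu, hd, hng⟩
        exact ⟨⟨hu, hd⟩, fun hh => hng ⟨hh.2.1, hh.2.2.2⟩⟩
      · rintro ⟨⟨hu, hd⟩, hnm⟩
        exact ⟨hu, hd, fun hh => hnm ⟨hu, hh.1, hd, hh.2⟩⟩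
    have hmsub : mset y ⊆ Tset := by
      intro i hi
      rw [hmset, Finset.mem_filter] at hi
      rw [hTset, Finset.mem_filter]
      exact ⟨hi.1, hi.2.2.1⟩
    have hgcard : gainS.card = Tset.card - (mset y).card := by
      rw [hgeq, Finset.card_sdiff_of_subset hmsub]
    -- lossS ⊆ mset y ∪ rset y
    have hlsub : lossS ⊆ mset y ∪ rset y := by
      intro i hi
      rw [hlossS, Finset.mem_filter] at hi
      obtain ⟨hu, h1, h4, he⟩ := hi
      rw [Finset.mem_union, hmset, hrset, Finset.mem_filter, Finset.mem_filter]
      by_cases hd3 : G.dist (p i) v ≤ 3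
      · left
        have := gate_eq hconn hg hvy.symm he (by omega)
        exact ⟨hu, h1, hd3, this.symm⟩
      · right
        exact ⟨hu, by omega, by omega⟩
    have hlcard : lossS.card ≤ (mset y).card + (rset y).card :=
      le_trans (Finset.card_le_card hlsub) (Finset.card_union_le _ _)
    have hmT := Finset.card_le_card hmsub
    omega
  -- sums of mset, rset cards
  have hmdisj : ∀ y₁ ∈ NB, ∀ y₂ ∈ NB, y₁ ≠ y₂ → Disjoint (mset y₁) (mset y₂) := by
    intro y₁ _ y₂ _ hne
    rw [Finset.disjoint_left]
    intro i hi1 hi2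
    rw [hmset, Finset.mem_filter] at hi1 hi2
    exact hne (hi1.2.2.2 ▸ hi2.2.2.2 ▸ rfl)
  have hrdisj : ∀ y₁ ∈ NB, ∀ y₂ ∈ NB, y₁ ≠ y₂ → Disjoint (rset y₁) (rset y₂) := by
    intro y₁ hy₁ y₂ hy₂ hne
    rw [Finset.disjoint_left]
    intro i hi1 hi2
    rw [hrset, Finset.mem_filter] at hi1 hi2
    have e₁ := gate_eq hconn hg (v := v) (z := p i) (x := y₁) (hNBadj.1 hy₁).symm
      (by omega) (by omega)
    have e₂ := gate_eq hconn hg (v := v) (z := p i) (x := y₂) (hNBadj.1 hy₂).symm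
      (by omega) (by omega)
    exact hne (e₁.trans e₂.symm)
  have hsm : ∑ y ∈ NB, (mset y).card ≤ Tset.card := by
    rw [← Finset.card_biUnion hmdisj]
    apply Finset.card_le_card
    intro i hi
    rw [Finset.mem_biUnion] at hi
    obtain ⟨y, -, hi⟩ := hi
    rw [hmset, Finset.mem_filter] at hi
    rw [hTset, Finset.mem_filter]
    exact ⟨hi.1, hi.2.2.1⟩
  have hsr : ∑ y ∈ NB, (rset y).card ≤ Rset.card := by
    rw [← Finset.card_biUnion hrdisj]
    apply Finset.card_le_card
    intro i hi
    rw [Finset.mem_biUnion] at hi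
    obtain ⟨y, -, hi⟩ := hi
    rw [hrset, Finset.mem_filter] at hi
    rw [hRset, Finset.mem_filter]
    exact ⟨hi.1, hi.2.1⟩
  have hTR : Tset.card + Rset.card ≤ c := by
    have hdisj : Disjoint Tset Rset := by
      rw [Finset.disjoint_left]
      intro i hi1 hi2
      rw [hTset, Finset.mem_filter] at hi1
      rw [hRset, Finset.mem_filter] at hi2
      omega
    have := Finset.card_le_card (Finset.subset_univ (Tset ∪ Rset))
    rw [Finset.card_union_of_disjoint hdisj] at this
    simpa using this
  -- T ≤ 1
  have hprod : NB.card * Tset.card ≤ 2 * Tset.card + Rset.card := by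
    have h1 : NB.card * Tset.card = ∑ _y ∈ NB, Tset.card := by
      rw [Finset.sum_const, smul_eq_mul]
    have h2 : ∑ y ∈ NB, Tset.card ≤ ∑ y ∈ NB, (2 * (mset y).card + (rset y).card) :=
      Finset.sum_le_sum hkey
    rw [Finset.sum_add_distrib, ← Finset.mul_sum] at h2
    omega
  have hT1 : Tset.card ≤ 1 := by
    by_contra hT2
    push_neg at hT2
    have hmul2 : NB.card * 2 ≤ NB.card * Tset.card := Nat.mul_le_mul_left _ (by omega)
    have hmul3 : 3 * Tset.card ≤ NB.card * Tset.card :=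
      Nat.mul_le_mul_right _ (by omega)
    omega
  rcases Nat.eq_zero_or_pos Tset.card with hT0 | hTpos
  · -- no cop within distance 3 at all
    have hfar : ∀ i, ¬ (G.dist (p i) v ≤ 3) := by
      intro i hi
      have : i ∈ Tset := by rw [hTset, Finset.mem_filter]; exact ⟨Finset.mem_univ _, hi⟩
      rw [Finset.card_eq_zero] at hT0
      rw [hT0] at this
      exact Finset.notMem_empty _ this
    obtain ⟨b, hb⟩ := hNBne v
    refine ⟨v, b, hNBadj.1 hb, fun i => by have := hfar i; omega, ?_⟩
    have : closeOff G p v b = ∅ := by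
      apply Finset.eq_empty_of_forall_notMem
      intro i hi
      rw [mem_closeOff] at hi
      exact hfar i hi.1
    rw [this]
    simp
  · -- exactly one cop within distance 3
    have hT1' : Tset.card = 1 := by omega
    obtain ⟨i₀, hi₀⟩ := Finset.card_eq_one.1 hT1'
    have hi₀mem : i₀ ∈ Tset := by rw [hi₀]; exact Finset.mem_singleton_self _
    have hd₀3 : G.dist (p i₀) v ≤ 3 := by
      rw [hTset, Finset.mem_filter] at hi₀mem
      exact hi₀mem.2
    have hother : ∀ i, i ≠ i₀ → 4 ≤ G.dist (p i) v := by
      intro i hne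
      by_contra hcon
      push_neg at hcon
      have : i ∈ Tset := by
        rw [hTset, Finset.mem_filter]
        exact ⟨Finset.mem_univ _, by omega⟩
      rw [hi₀, Finset.mem_singleton] at this
      exact hne this
    by_cases hd₀2 : 2 ≤ G.dist (p i₀) v
    · -- the close cop is at distance 2 or 3: stay at v
      have hgs := gate_spec hconn (v := v) (z := p i₀) (by omega)
      refine ⟨v, gate G v (p i₀), hgs.1.symm, ?_, ?_⟩
      · intro i
        by_cases hii : i = i₀
        · rw [hii]; omega
        · have := hother i hii; omega
      · have : closeOff G p v (gate G v (p i₀)) = ∅ := by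
          apply Finset.eq_empty_of_forall_notMem
          intro i hi
          rw [mem_closeOff] at hi
          have hii : i = i₀ := by
            by_contra hne
            have := hother i hne
            omega
          rw [hii] at hi
          exact hi.2 rfl
        rw [this]
        simp
    · -- the close cop is adjacent to v
      push_neg at hd₀2
      -- first, distance 0 is impossible
      have hd₀1 : G.dist (p i₀) v = 1 := by
        by_contra hne1
        have hd₀0 : G.dist (p i₀) v = 0 := by omega
        -- every neighbor has an rset element
        have hr1 : ∀ y ∈ NB, 1 ≤ (rset y).card := by
          intro y hy
          have := hkey y hy
          have hm0 : (mset y).card = 0 := by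
            rw [Finset.card_eq_zero]
            apply Finset.eq_empty_of_forall_notMem
            intro i hi
            rw [hmset, Finset.mem_filter] at hi
            have hii : i = i₀ := by
              by_contra hne
              have := hother i hne
              omega
            rw [hii] at hi
            omega
          omega
        have : NB.card ≤ ∑ y ∈ NB, (rset y).card := by
          calc NB.card = ∑ _y ∈ NB, 1 := by rw [Finset.sum_const, smul_eq_mul, mul_one]
          _ ≤ _ := Finset.sum_le_sum hr1
        have hRc : Rset.card ≤ c - 1 := by omega
        omega
      -- p i₀ is a neighbor u of v
      have hadj₀ : G.Adj (p i₀) v := SimpleGraph.dist_eq_one_iff_adj.1 hd₀1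
      set u := p i₀ with hu
      have huNB : u ∈ NB := hNBadj.2 hadj₀.symm
      have hgu : gate G v (p i₀) = u := by
        have hd' : G.dist (p i₀) v = 1 := by rw [← hu]; exact hd₀1
        have hadj₀' : G.Adj (p i₀) v := by rw [← hu]; exact hadj₀
        have h := gate_eq hconn hg (v := v) (z := p i₀) (x := p i₀) hadj₀'
          (by rw [SimpleGraph.dist_self]; omega) (by omega)
        rw [hu]
        exact h.symm
      -- mset y = ∅ for y ≠ u, so rset y ≥ 1 for all y ≠ u in NB
      have hr1 : ∀ y ∈ NB, y ≠ u → 1 ≤ (rset y).card := by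
        intro y hy hneu
        have := hkey y hy
        have hm0 : (mset y).card = 0 := by
          rw [Finset.card_eq_zero]
          apply Finset.eq_empty_of_forall_notMem
          intro i hi
          rw [hmset, Finset.mem_filter] at hi
          have hii : i = i₀ := by
            by_contra hne
            have := hother i hne
            omega
          rw [hii] at hi
          rw [hgu] at hi
          exact hneu hi.2.2.2.symm
        omega
      -- pick y₁ ∈ NB, y₁ ≠ u
      obtain ⟨y₁, hy₁⟩ : (NB.erase u).Nonempty := by
        rw [← Finset.card_pos, Finset.card_erase_of_mem huNB]
        omega
      have hy₁NB : y₁ ∈ NB := Finset.mem_of_mem_erase hy₁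
      have hy₁u : y₁ ≠ u := Finset.ne_of_mem_erase hy₁
      have hvy₁ : G.Adj v y₁ := hNBadj.1 hy₁NB
      -- rset y₁ has exactly one element
      have hRc : Rset.card ≤ c - 1 := by omega
      have hsum_erase : ∑ y ∈ NB.erase u, (rset y).card ≤ Rset.card := by
        refine le_trans (Finset.sum_le_sum_of_subset (Finset.erase_subset _ _)) hsr
      have hcard_erase : NB.card - 1 ≤ ∑ y ∈ NB.erase u, (rset y).card := by
        calc NB.card - 1 = ∑ _y ∈ NB.erase u, 1 := by
              rw [Finset.sum_const, smul_eq_mul, mul_one, Finset.card_erase_of_mem huNB]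
        _ ≤ _ := Finset.sum_le_sum (fun y hy =>
            hr1 y (Finset.mem_of_mem_erase hy) (Finset.ne_of_mem_erase hy))
      have hry₁1 : (rset y₁).card = 1 := by
        have h1 := hr1 y₁ hy₁NB hy₁u
        by_contra hne
        have h2 : 2 ≤ (rset y₁).card := by omega
        have hsplit := Finset.sum_erase_add (NB.erase u) (fun y => (rset y).card)
          hy₁
        have hge : ∑ y ∈ (NB.erase u).erase y₁, (rset y).card ≥ NB.card - 2 := by
          calc NB.card - 2 = ∑ _y ∈ (NB.erase u).erase y₁, 1 := by
                rw [Finset.sum_const, smul_eq_mul, mul_one, Finset.card_erase_of_mem hy₁,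
                  Finset.card_erase_of_mem huNB]
                omega
          _ ≤ _ := Finset.sum_le_sum (fun y hy => hr1 y
                (Finset.mem_of_mem_erase (Finset.mem_of_mem_erase hy))
                (Finset.ne_of_mem_erase (Finset.mem_of_mem_erase hy)))
        omega
      obtain ⟨i₁, hi₁⟩ := Finset.card_eq_one.1 hry₁1
      have hi₁mem : i₁ ∈ rset y₁ := by rw [hi₁]; exact Finset.mem_singleton_self _
      have hi₁facts : G.dist (p i₁) v = 4 ∧ G.dist (p i₁) y₁ = 3 := by
        have := hi₁mem
        rw [hrset, Finset.mem_filter] at this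
        exact this.2
      -- all other cops are at distance ≥ 4 from y₁
      have hfar₁ : ∀ i, i ≠ i₀ → i ≠ i₁ → 4 ≤ G.dist (p i) y₁ := by
        intro i hni₀ hni₁
        have hd4 := hother i hni₀
        obtain ⟨hn1, hn2⟩ := dist_near hconn hvy₁.symm (p i)
        by_contra hcon
        push_neg at hcon
        have he3 : G.dist (p i) y₁ = 3 := by omega
        have hdv : G.dist (p i) v = 4 := by omega
        have : i ∈ rset y₁ := by
          rw [hrset, Finset.mem_filter]
          exact ⟨Finset.mem_univ _, hdv, he3⟩
        rw [hi₁, Finset.mem_singleton] at this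
        exact hni₁ this
      -- dist(u, y₁) = 2
      have huy₁ : G.dist u y₁ = 2 := by
        have hne : u ≠ y₁ := fun h => hy₁u h.symm
        have h1 : 1 ≤ G.dist u y₁ := hconn.pos_dist_of_ne hne
        have hnadj : ¬ G.Adj u y₁ := fun h => no_adjacent_neighbors hg hadj₀ hvy₁.symm h
        have h2 : G.dist u y₁ ≠ 1 := fun h => hnadj (SimpleGraph.dist_eq_one_iff_adj.1 h)
        have h3 : G.dist u y₁ ≤ 2 := by
          have htri := hconn.dist_triangle (u := u) (v := v) (w := y₁)
          rw [dist_adj hadj₀, dist_adj hvy₁] at htri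
          exact htri
        omega
      have hi₁ne₀ : i₁ ≠ i₀ := by
        intro h
        rw [h, ← hu] at hi₁facts
        omega
      -- gates toward y₁
      have hgate_u : gate G y₁ u = v :=
        (gate_eq hconn hg (v := y₁) (z := u) (x := v) hvy₁
          (by rw [dist_adj hadj₀, huy₁]) (by rw [huy₁]; omega)).symm
      have hgs₁ := gate_spec hconn (v := y₁) (z := p i₁) (by rw [hi₁facts.2]; omega)
      set w₁ := gate G y₁ (p i₁) with hw₁
      have hw₁v : w₁ ≠ v := by
        intro h
        have h5 := hgs₁.2
        rw [h] at h5
        have h6 := hi₁facts.1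
        have h7 := hi₁facts.2
        omega
      refine ⟨y₁, w₁, hgs₁.1.symm, ?_, ?_⟩
      · intro i
        by_cases hii₀ : i = i₀
        · rw [hii₀]
          rw [← hu, huy₁]
        · by_cases hii₁ : i = i₁
          · rw [hii₁, hi₁facts.2]
            omega
          · have := hfar₁ i hii₀ hii₁
            omega
      · have hsub : closeOff G p y₁ w₁ ⊆ {i₀} := by
          intro i hi
          rw [mem_closeOff] at hi
          rw [Finset.mem_singleton]
          by_contra hii₀
          by_cases hii₁ : i = i₁
          · rw [hii₁] at hi
            exact hi.2 rfl
          · have := hfar₁ i hii₀ hii₁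
            omega
        have := Finset.card_le_card hsub
        rw [Finset.card_singleton] at this
        omega

open scoped Classical in
/-- The robber's (memoryless) move function. -/
noncomputable def robMove (G : SimpleGraph V) (δ : ℕ) {c : ℕ} (p : Fin c → V) (r : V) : V :=
  if h : ∃ y, G.Adj r y ∧ (∀ i, 2 ≤ G.dist (p i) y) ∧ (closeOff G p y r).card ≤ δ - 2
  then h.choose else r

lemma robMove_valid (δ : ℕ) {c : ℕ} (p : Fin c → V) (r : V) :
    robMove G δ p r = r ∨ G.Adj r (robMove G δ p r) := by
  classical
  rw [robMove]
  by_cases h : ∃ y, G.Adj r y ∧ (∀ i, 2 ≤ G.dist (p i) y) ∧ (closeOff G p y r).card ≤ δ - 2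
  · rw [dif_pos h]
    exact Or.inr h.choose_spec.1
  · rw [dif_neg h]
    exact Or.inl rfl

lemma robMove_spec (δ : ℕ) {c : ℕ} (p : Fin c → V) (r : V)
    (h : ∃ y, G.Adj r y ∧ (∀ i, 2 ≤ G.dist (p i) y) ∧ (closeOff G p y r).card ≤ δ - 2) :
    G.Adj r (robMove G δ p r) ∧ (∀ i, 2 ≤ G.dist (p i) (robMove G δ p r)) ∧
      (closeOff G p (robMove G δ p r) r).card ≤ δ - 2 := by
  classical
  rw [robMove, dif_pos h]
  exact h.choose_spec

/-- The deterministic play sequence. -/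
noncomputable def gameSeq {c : ℕ} (init : Fin c → V) (F : (Fin c → V) → V → Fin c → V)
    (rmv : (Fin c → V) → V → V) (r0 : V) : ℕ → (Fin c → V) × V
  | 0 => (init, r0)
  | (t+1) =>
      ((F (gameSeq init F rmv r0 t).1 (gameSeq init F rmv r0 t).2),
        rmv (F (gameSeq init F rmv r0 t).1 (gameSeq init F rmv r0 t).2)
          (gameSeq init F rmv r0 t).2)

end CopsRobbersAux


/-- `copsWin G c` : in the game of cops and robbers on `G`, `c` cops have a winning
strategy. The cops choose initial positions `init` and a move function `F` (each cop
stays put or moves along an edge). The robber then chooses an initial position (knowing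
the cops' placement) and a move function (staying put or moving along an edge); cops
move first on each turn. The cops win if at some time a cop occupies the robber's
current vertex. -/
def copsWin {V : Type*} (G : SimpleGraph V) (c : ℕ) : Prop :=
  ∃ (init : Fin c → V) (F : (Fin c → V) → V → (Fin c → V)),
    (∀ (p : Fin c → V) (r : V) (i : Fin c), F p r i = p i ∨ G.Adj (p i) (F p r i)) ∧
    ∀ (rinit : (Fin c → V) → V) (rmove : (Fin c → V) → V → V),
      (∀ (p : Fin c → V) (r : V), rmove p r = r ∨ G.Adj r (rmove p r)) →
      ∀ (cseq : ℕ → Fin c → V) (rseq : ℕ → V),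
        cseq 0 = init → rseq 0 = rinit init →
        (∀ t, cseq (t + 1) = F (cseq t) (rseq t)) →
        (∀ t, rseq (t + 1) = rmove (cseq (t + 1)) (rseq t)) →
        ∃ (t : ℕ) (i : Fin c), cseq t i = rseq t ∨ cseq (t + 1) i = rseq t

/-- The cop number of `G`: the least number of cops having a winning strategy. -/
noncomputable def copNumber {V : Type*} (G : SimpleGraph V) : ℕ :=
  sInf {c | copsWin G c}

/-- If `G` is a connected simple graph of minimum degree `δ ≥ 3` and girth at least 9,
then `c ≤ δ` cops do not have a winning strategy (the robber can evade forever);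
equivalently, the cop number of `G` is strictly greater than `δ`. -/
theorem cop_number_gt_min_degree_of_girth_ge_nine {V : Type*} [Fintype V]
    (G : SimpleGraph V) [DecidableRel G.Adj] (hconn : G.Connected)
    (δ : ℕ) (hδ : 3 ≤ δ) (hdeg : ∀ v : V, δ ≤ G.degree v) (hg : 9 ≤ G.girth) :
    (∀ c ≤ δ, ¬ copsWin G c) ∧ δ < copNumber G := by
  classical
  have part1 : ∀ c ≤ δ, ¬ copsWin G c := by
    rintro c hc ⟨init, F, hF, Hwin⟩
    -- robber's initial vertex
    obtain ⟨b0, hb0, hdist0, hcard0⟩ := (start hconn hg hδ hdeg hc init).choose_spec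
    set r0 := (start hconn hg hδ hdeg hc init).choose with hr0def
    -- play sequence
    set seq := gameSeq init F (robMove G δ) r0 with hseq
    set cseq : ℕ → Fin c → V := fun t => (seq t).1 with hcseq
    set rseq : ℕ → V := fun t => (seq t).2 with hrseq
    have hrecc : ∀ t, cseq (t + 1) = F (cseq t) (rseq t) := fun t => rfl
    have hrecr : ∀ t, rseq (t + 1) = robMove G δ (cseq (t + 1)) (rseq t) := fun t => rfl
    -- the invariant
    have hinv : ∀ t, (∀ i, 2 ≤ G.dist (cseq t i) (rseq t)) ∧
        ∃ b, G.Adj (rseq t) b ∧ (closeOff G (cseq t) (rseq t) b).card ≤ δ - 2 := by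
      intro t
      induction t with
      | zero => exact ⟨hdist0, b0, hb0, hcard0⟩
      | succ t ih =>
          obtain ⟨h1t, b, hbt, h2t⟩ := ih
          have hmove : ∀ i, cseq (t + 1) i = cseq t i ∨ G.Adj (cseq t i) (cseq (t + 1) i) :=
            fun i => hF (cseq t) (rseq t) i
          have hex := maint hconn hg hδ hdeg hc hmove h1t hbt h2t
          have hspec := robMove_spec (G := G) δ (cseq (t + 1)) (rseq t) hex
          rw [← hrecr t] at hspec
          exact ⟨hspec.2.1, rseq t, hspec.1.symm, hspec.2.2⟩
    -- no capture, contradiction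
    obtain ⟨t, i, hcatch⟩ := Hwin (fun _ => r0) (robMove G δ) (robMove_valid δ) cseq rseq
      rfl rfl hrecc hrecr
    rcases hcatch with h | h
    · have := (hinv t).1 i
      rw [h, SimpleGraph.dist_self] at this
      omega
    · have h2 := (hinv t).1 i
      have hmv : G.dist (cseq t i) (cseq (t + 1) i) ≤ 1 := by
        rcases hF (cseq t) (rseq t) i with hh | hh
        · rw [hrecc t, hh, SimpleGraph.dist_self]
          omega
        · rw [hrecc t]
          rw [dist_adj hh]
      have htri := hconn.dist_triangle (u := cseq t i) (v := cseq (t + 1) i) (w := rseq t)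
      have hz : G.dist (cseq (t + 1) i) (rseq t) = 0 := by rw [h, SimpleGraph.dist_self]
      omega
  refine ⟨part1, ?_⟩
  have hwinAll : copsWin G (Fintype.card V) := by
    refine ⟨fun i => (Fintype.equivFin V).symm i, fun p _ => p, fun p r i => Or.inl rfl, ?_⟩
    intro rinit rmove hr cseq rseq h0 hr0 hcrec hrrec
    refine ⟨0, Fintype.equivFin V (rseq 0), Or.inl ?_⟩
    rw [h0]
    simp
  have hne : {c | copsWin G c}.Nonempty := ⟨_, hwinAll⟩
  have hmem : copNumber G ∈ {c | copsWin G c} := Nat.sInf_mem hne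
  by_contra hlt
  push_neg at hlt
  exact part1 _ hlt hmem
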